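/- Let π : P → GL(V) be a faithful irreducible complex representation of a finite p-group P, let a ∈ 𝔷₂(P) \ 𝔷₁(P), x ∈ P with z = [x,a] ≠ 1 of order q in the center. Then the dimension n = dim V is divisible by q, and the character χ_π satisfies χ_π(aᵗ) = 0 and χ_π(xᵗ) = 0 for all integers t not divisible by q. -/

import Mathlib

/-- A matrix representation is irreducible if the only invariant subspaces are trivial. -/
def IsIrreducibleRep {G : Type*} [Group G] {n : ℕ}
    (ρ : G →* Matrix.GeneralLinearGroup (Fin n) ℂ) : Prop :=
  ∀ W : Submodule ℂ (Fin n → ℂ),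
    (∀ (g : G), ∀ v ∈ W, (ρ g : Matrix (Fin n) (Fin n) ℂ).mulVec v ∈ W) →
    W = ⊥ ∨ W = ⊤


-- Schur lemma step, as auxiliary lemma
theorem schur_scalar {P : Type*} [Group P] {n : ℕ} (hn : 0 < n)
    (π : P →* Matrix.GeneralLinearGroup (Fin n) ℂ)
    (hirr : ∀ W : Submodule ℂ (Fin n → ℂ),
      (∀ (g : P), ∀ v ∈ W, (π g : Matrix (Fin n) (Fin n) ℂ).mulVec v ∈ W) →
      W = ⊥ ∨ W = ⊤)
    (z : P) (hz : z ∈ Subgroup.center P) :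
    ∃ c : ℂ, (π z : Matrix (Fin n) (Fin n) ℂ) = c • 1 := by
  haveI : Nonempty (Fin n) := ⟨⟨0, hn⟩⟩
  set M : Matrix (Fin n) (Fin n) ℂ := (π z : Matrix (Fin n) (Fin n) ℂ) with hM
  obtain ⟨c, hc⟩ := Module.End.exists_eigenvalue M.mulVecLin
  refine ⟨c, ?_⟩
  have hcomm : ∀ g : P, (π g : Matrix (Fin n) (Fin n) ℂ) * M = M * (π g : Matrix (Fin n) (Fin n) ℂ) := by
    intro g
    have h1 : π g * π z = π z * π g := by
      rw [← map_mul, ← map_mul, (Subgroup.mem_center_iff.mp hz g)]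
    have := congrArg (Units.val) h1
    simpa using this
  have hinv : ∀ (g : P), ∀ v ∈ Module.End.eigenspace M.mulVecLin c,
      (π g : Matrix (Fin n) (Fin n) ℂ).mulVec v ∈ Module.End.eigenspace M.mulVecLin c := by
    intro g v hv
    rw [Module.End.mem_eigenspace_iff] at hv ⊢
    simp only [Matrix.mulVecLin_apply] at hv ⊢
    rw [Matrix.mulVec_mulVec, ← hcomm g, ← Matrix.mulVec_mulVec, hv, Matrix.mulVec_smul]
  rcases hirr _ hinv with h | h
  · exact absurd h hc
  · have hall : ∀ v : Fin n → ℂ, M.mulVec v = c • v := by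
      intro v
      have hv : v ∈ Module.End.eigenspace M.mulVecLin c := h ▸ Submodule.mem_top
      rw [Module.End.mem_eigenspace_iff] at hv
      simpa using hv
    ext i j
    have := congrFun (hall (Pi.single j 1)) i
    rw [Matrix.mulVec_single] at this
    simp at this
    simp [this, Matrix.one_apply, Pi.single_apply]

open scoped commutatorElement

theorem stmt10 {p : ℕ} [Fact p.Prime] {P : Type*} [Group P] [Fintype P]
    (hP : IsPGroup p P) (hC : IsCyclic (Subgroup.center P)) {n : ℕ} (hn : 0 < n)
    (π : P →* Matrix.GeneralLinearGroup (Fin n) ℂ)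
    (hfaith : Function.Injective π) (hirr : IsIrreducibleRep π)
    (a : P) (ha : a ∈ upperCentralSeries P 2) (ha' : a ∉ upperCentralSeries P 1)
    (x : P) (hz : ⁅x, a⁆ ≠ 1) :
    orderOf ⁅x, a⁆ ∣ n ∧
    ∀ t : ℤ, ¬ ((orderOf ⁅x, a⁆ : ℤ) ∣ t) →
      Matrix.trace ((π (a ^ t) : Matrix (Fin n) (Fin n) ℂ)) = 0 ∧
      Matrix.trace ((π (x ^ t) : Matrix (Fin n) (Fin n) ℂ)) = 0 := by
  classical
  haveI : Nonempty (Fin n) := ⟨⟨0, hn⟩⟩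
  set z := ⁅x, a⁆ with hzdef
  -- z is central
  have hz_center : z ∈ Subgroup.center P := by
    have h2 : a * x * a⁻¹ * x⁻¹ ∈ upperCentralSeries P 1 :=
      (mem_upperCentralSeries_succ_iff).mp ha x
    rw [show upperCentralSeries P 1 = Subgroup.upperCentralSeries P 1 from rfl,
      Subgroup.upperCentralSeries_one] at h2
    have : z = (a * x * a⁻¹ * x⁻¹)⁻¹ := by
      rw [hzdef, commutatorElement_def]; group
    rw [this]
    exact (Subgroup.center P).inv_mem h2
  have hcomm : ∀ g : P, g * z = z * g := fun g => Subgroup.mem_center_iff.mp hz_center g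
  -- Schur: π z is scalar
  obtain ⟨c, hc⟩ := schur_scalar hn π hirr z hz_center
  -- c is nonzero
  have hdet : ((π z : Matrix (Fin n) (Fin n) ℂ)).det ≠ 0 := by
    have : IsUnit ((π z : Matrix (Fin n) (Fin n) ℂ)).det :=
      ((Matrix.isUnit_iff_isUnit_det _).mp (π z).isUnit)
    exact this.ne_zero
  have hc0 : c ≠ 0 := by
    intro h
    rw [hc, h, Matrix.det_smul] at hdet
    simp at hdet
    omega
  set u : ℂˣ := Units.mk0 c hc0 with hu
  -- the scalar embedding
  set S : ℂˣ →* Matrix.GeneralLinearGroup (Fin n) ℂ :=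
    Units.map (Matrix.scalar (Fin n)).toMonoidHom with hS
  have hSval : ∀ w : ℂˣ, ((S w : Matrix (Fin n) (Fin n) ℂ)) = (w : ℂ) • 1 := by
    intro w
    simp [hS, Matrix.scalar_apply, Matrix.smul_one_eq_diagonal]
  have hπz : π z = S u := by
    apply Units.ext
    rw [hSval]
    simpa [hu] using hc
  have hSinj : Function.Injective S := by
    apply Units.map_injective
    intro r s hrs
    exact (Matrix.scalar_inj).mp hrs
  -- orders agree
  have horder : orderOf u = orderOf z := by
    have h1 : orderOf (π z) = orderOf z := orderOf_injective π hfaith z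
    have h2 : orderOf (S u) = orderOf u := orderOf_injective S hSinj u
    rw [hπz, h2] at h1
    exact h1
  -- conjugation relations
  have hconj_a : x * a * x⁻¹ = z * a := by rw [hzdef, commutatorElement_def]; group
  have hconj_x : a * x * a⁻¹ = z⁻¹ * x := by rw [hzdef, commutatorElement_def]; group
  -- q ∣ n via determinant
  have hdvd : orderOf z ∣ n := by
    have h1 : π x * π a * (π x)⁻¹ = S u * π a := by
      rw [← map_inv, ← map_mul, ← map_mul, hconj_a, map_mul, hπz]
    have h2 := congrArg (Matrix.GeneralLinearGroup.det) h1
    simp only [map_mul, map_inv] at h2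
    have h3 : Matrix.GeneralLinearGroup.det (S u) = 1 := by
      have hcg : Matrix.GeneralLinearGroup.det (π x) * Matrix.GeneralLinearGroup.det (π a) *
          (Matrix.GeneralLinearGroup.det (π x))⁻¹ = Matrix.GeneralLinearGroup.det (π a) := by
        rw [mul_comm (Matrix.GeneralLinearGroup.det (π x)), mul_assoc, mul_inv_cancel, mul_one]
      rw [hcg] at h2
      exact right_eq_mul.mp h2
    have h4 : (u : ℂ) ^ n = 1 := by
      have := congrArg (Units.val) h3
      rw [Matrix.GeneralLinearGroup.val_det_apply, hSval, Matrix.det_smul,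
        Matrix.det_one] at this
      simpa using this
    have h5 : u ^ n = 1 := by
      apply Units.ext
      simpa using h4
    rw [← horder]
    exact orderOf_dvd_of_pow_eq_one h5
  refine ⟨hdvd, ?_⟩
  intro t ht
  -- scalar value of π (z ^ t)
  have hpow : ∀ s : ℤ, ((π (z ^ s) : Matrix (Fin n) (Fin n) ℂ)) = ((u ^ s : ℂˣ) : ℂ) • 1 := by
    intro s
    rw [map_zpow, hπz, ← map_zpow, hSval]
  have hune : ∀ s : ℤ, ¬ ((orderOf z : ℤ) ∣ s) → ((u ^ s : ℂˣ) : ℂ) ≠ 1 := by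
    intro s hs h1
    apply hs
    rw [← horder]
    rw [orderOf_dvd_iff_zpow_eq_one]
    exact Units.ext (by simpa using h1)
  constructor
  · -- trace of π (a ^ t)
    have hca : x * a ^ t * x⁻¹ = z ^ t * a ^ t := by
      rw [← conj_zpow, hconj_a]
      exact (Commute.mul_zpow ((hcomm a).symm) t)
    have h1 : Matrix.trace ((π (x * a ^ t * x⁻¹) : Matrix (Fin n) (Fin n) ℂ)) =
        Matrix.trace ((π (a ^ t) : Matrix (Fin n) (Fin n) ℂ)) := by
      have he : π (x * a ^ t * x⁻¹) = π x * π (a ^ t) * (π x)⁻¹ := by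
        rw [map_mul, map_mul, map_inv]
      rw [he]
      exact Matrix.trace_units_conj (π x) _
    rw [hca, map_mul, Units.val_mul, hpow, Matrix.smul_mul, Matrix.one_mul,
      Matrix.trace_smul] at h1
    rcases mul_left_eq_self₀.mp h1 with h1 | h1
    · exact absurd h1 (hune t ht)
    · exact h1
  · -- trace of π (x ^ t)
    have hca : a * x ^ t * a⁻¹ = z ^ (-t) * x ^ t := by
      rw [← conj_zpow, hconj_x]
      have : (z⁻¹ * x) ^ t = (z⁻¹) ^ t * x ^ t :=
        Commute.mul_zpow (Commute.inv_left ((hcomm x).symm : Commute z x)) t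
      rw [this, inv_zpow, ← zpow_neg]
    have h1 : Matrix.trace ((π (a * x ^ t * a⁻¹) : Matrix (Fin n) (Fin n) ℂ)) =
        Matrix.trace ((π (x ^ t) : Matrix (Fin n) (Fin n) ℂ)) := by
      have he : π (a * x ^ t * a⁻¹) = π a * π (x ^ t) * (π a)⁻¹ := by
        rw [map_mul, map_mul, map_inv]
      rw [he]
      exact Matrix.trace_units_conj (π a) _
    rw [hca, map_mul, Units.val_mul, hpow, Matrix.smul_mul, Matrix.one_mul,
      Matrix.trace_smul] at h1
    rcases mul_left_eq_self₀.mp h1 with h1 | h1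
    · exact absurd h1 (hune (-t) (by rwa [dvd_neg]))
    · exact h1
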